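/- Let G be a group, R an integral domain, ρ : G → GL(l, R) a representation, φ : G → ℤⁿ a surjective homomorphism, C_* a bounded chain complex of finitely generated free right ℤ[G]-modules, and let k ≥ 0, q > 0. Then there is a finite family of proper full subgroups G_1, …, G_s of Hom(ℤⁿ, ℤ) such that for every m ≥ 0 and every group homomorphism p : ℤⁿ → ℤᵐ, the condition b_k(C_*, ρ; p) ≥ b_k°(C_*, ρ) + q holds if and only if p is subordinate to G_i for some i. -/

import Mathlib

/-- A finite free chain complex `0 ← C_0 ← C_1 ← ⋯ ← C_N ← 0` over a ring `T`,
recorded by the ranks `c k` of its finitely generated free chain modules and the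
matrices of its boundary operators; `d k` is the matrix of `∂_{k+1} : C_{k+1} → C_k`. -/
structure FinFreeChainComplex (T : Type) [Ring T] where
  N : ℕ
  c : ℕ → ℕ
  bounded : ∀ k : ℕ, N < k → c k = 0
  d : ∀ k : ℕ, Matrix (Fin (c k)) (Fin (c (k + 1))) T
  dsq : ∀ k : ℕ, d k * d (k + 1) = 0

/-- The rank, over the fraction field `{U}` of `U`, of the matrix of `∂_{k+1}`
with entries mapped by the ring homomorphism `φ : T →+* U`. -/
noncomputable def FinFreeChainComplex.bdryRank {T U : Type} [Ring T] [CommRing U]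
    (C : FinFreeChainComplex T) (φ : T →+* U) (k : ℕ) : ℕ :=
  ((C.d k).map ⇑((algebraMap U (FractionRing U)).comp φ)).rank

/-- The rank, over `{U}`, of the matrix of `∂_k : C_k → C_{k-1}` (with `∂_0 = 0`)
with entries mapped by `φ`. -/
noncomputable def FinFreeChainComplex.bdryRankAt {T U : Type} [Ring T] [CommRing U]
    (C : FinFreeChainComplex T) (φ : T →+* U) (k : ℕ) : ℕ :=
  match k with
  | 0 => 0
  | k' + 1 => C.bdryRank φ k'

/-- `b_k(C_*, φ) = dim_{{U}} H_k(C_* ⊗_φ {U}) = c_k − rk φ(∂_k) − rk φ(∂_{k+1})`. -/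
noncomputable def FinFreeChainComplex.bettiMap {T U : Type} [Ring T] [CommRing U]
    (C : FinFreeChainComplex T) (φ : T →+* U) (k : ℕ) : ℕ :=
  C.c k - C.bdryRankAt φ k - C.bdryRank φ k

/-- `b_k(C_*) = dim_{{T}} H_k(C_* ⊗_T {T})`. -/
noncomputable def FinFreeChainComplex.betti {T : Type} [CommRing T]
    (C : FinFreeChainComplex T) (k : ℕ) : ℕ :=
  C.bettiMap (RingHom.id T) k


/-- Flattening of a block matrix: a matrix of `l × l` matrices becomes an ordinary matrix. -/
def blockFlatten {a b l : ℕ} {S : Type}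
    (M : Matrix (Fin a) (Fin b) (Matrix (Fin l) (Fin l) S)) :
    Matrix (Fin a × Fin l) (Fin b × Fin l) S :=
  Matrix.of fun ik jl => M ik.1 jl.1 ik.2 jl.2

/-- The ring homomorphism `ℤ[G] → Mat_l(S)` induced by a representation
`τ : G →* GL(l, S)`. -/
noncomputable def reprMatRingHom {G : Type} [Group G] {l : ℕ} {S : Type} [CommRing S]
    (τ : G →* GL (Fin l) S) : MonoidAlgebra ℤ G →+* Matrix (Fin l) (Fin l) S :=
  ((MonoidAlgebra.lift ℤ (Matrix (Fin l) (Fin l) S) G)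
    ((Units.coeHom (Matrix (Fin l) (Fin l) S)).comp τ)).toRingHom

/-- The rank over the fraction field `{S}` of the matrix of `∂_{k+1} ⊗ 1` in the
complex `C_* ⊗_{ℤ[G], τ} {S}^l`. -/
noncomputable def reprBdryRank {G : Type} [Group G] {l : ℕ} {S : Type} [CommRing S]
    (C : FinFreeChainComplex (MonoidAlgebra ℤ G)) (τ : G →* GL (Fin l) S) (k : ℕ) : ℕ :=
  ((blockFlatten ((C.d k).map ⇑(reprMatRingHom τ))).map
    ⇑(algebraMap S (FractionRing S))).rank

/-- The rank over `{S}` of the matrix of `∂_k ⊗ 1` (with `∂_0 = 0`). -/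
noncomputable def reprBdryRankAt {G : Type} [Group G] {l : ℕ} {S : Type} [CommRing S]
    (C : FinFreeChainComplex (MonoidAlgebra ℤ G)) (τ : G →* GL (Fin l) S) (k : ℕ) : ℕ :=
  match k with
  | 0 => 0
  | k' + 1 => reprBdryRank C τ k'

/-- `b_k(C_*, τ) = dim_{{S}} H_k(C_* ⊗_{ℤ[G], τ} {S}^l)` for a representation
`τ : G →* GL(l, S)` into an integral domain `S`. -/
noncomputable def reprBetti {G : Type} [Group G] {l : ℕ} {S : Type} [CommRing S]
    (C : FinFreeChainComplex (MonoidAlgebra ℤ G)) (τ : G →* GL (Fin l) S) (k : ℕ) : ℕ :=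
  C.c k * l - reprBdryRankAt C τ k - reprBdryRank C τ k

/-- The homomorphism `GL(l, S) →* GL(l, S')` induced by a ring homomorphism `S →+* S'`. -/
def glMap {l : ℕ} {S S' : Type} [CommRing S] [CommRing S'] (f : S →+* S') :
    GL (Fin l) S →* GL (Fin l) S' :=
  Units.map f.mapMatrix.toMonoidHom

/-- `p : ℤⁿ → ℤᵐ` is subordinate to a subgroup `G ⊆ Hom(ℤⁿ, ℤ)` if all the coordinate
homomorphisms of `p` belong to `G`. -/
def Subordinate {n m : ℕ} (p : (Fin n → ℤ) →+ (Fin m → ℤ))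
    (G : AddSubgroup ((Fin n → ℤ) →+ ℤ)) : Prop :=
  ∀ j : Fin m, (Pi.evalAddMonoidHom (fun _ : Fin m => ℤ) j).comp p ∈ G


set_option linter.unusedSectionVars false
set_option linter.unusedVariables false
set_option maxHeartbeats 1000000


section Sec1
open Matrix Module Submodule

variable {F : Type} [Field F]

lemma rank_submatrix_le_gen {ι κ : Type} [Fintype ι] [Fintype κ] [DecidableEq ι]
    [DecidableEq κ] {u v : ℕ} (M : Matrix ι κ F) (r : Fin u → ι) (c : Fin v → κ) :
    (M.submatrix r c).rank ≤ M.rank := by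
  have h2 : M.submatrix r c =
      (Matrix.of fun i j => if r i = j then (1:F) else 0) * M *
      (Matrix.of fun i j => if i = c j then (1:F) else 0) := by
    ext i j
    simp [Matrix.mul_apply, ite_mul, mul_ite, Finset.sum_ite_eq, Finset.sum_ite_eq']
  rw [h2]
  exact le_trans (Matrix.rank_mul_le_left _ _) (Matrix.rank_mul_le_right _ _)

lemma det_eq_zero_of_rank_lt {t : ℕ} (K : Matrix (Fin t) (Fin t) F) (h : K.rank < t) :
    K.det = 0 := by
  by_contra hd
  have : IsUnit K := (Matrix.isUnit_iff_isUnit_det K).2 (isUnit_iff_ne_zero.2 hd)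
  rw [Matrix.rank_of_isUnit K this, Fintype.card_fin] at h
  exact lt_irrefl _ h

lemma det_ne_zero_of_rank_eq {t : ℕ} (K : Matrix (Fin t) (Fin t) F) (h : K.rank = t) :
    K.det ≠ 0 := by
  have hsur : Function.Surjective K.mulVecLin := by
    rw [← LinearMap.range_eq_top]
    apply Submodule.eq_top_of_finrank_eq
    rw [show finrank F (LinearMap.range K.mulVecLin) = K.rank from rfl, h,
      finrank_pi, Fintype.card_fin]
  have : IsUnit K := by
    rw [← Matrix.mulVec_surjective_iff_isUnit]
    exact hsur
  exact IsUnit.ne_zero ((Matrix.isUnit_iff_isUnit_det K).1 this)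

lemma exists_cols_rank_eq {ι κ : Type} [Fintype ι] [Fintype κ] {t : ℕ}
    (M : Matrix ι κ F) (h : t ≤ M.rank) :
    ∃ c : Fin t → κ, (M.submatrix id c).rank = t := by
  classical
  obtain ⟨u, hus, hspan, hind⟩ := exists_linearIndependent F (Set.range Mᵀ)
  have hufin : u.Finite := Set.Finite.subset (Set.finite_range Mᵀ) hus
  haveI := hufin.fintype
  have hcardeq : finrank F (span F u) = Fintype.card u := by
    rw [finrank_span_set_eq_card hind, Set.toFinset_card]
  have hcard : t ≤ Fintype.card u := by
    rw [← hcardeq, hspan]; exact h.trans (Matrix.rank_eq_finrank_span_cols M).le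
  obtain ⟨emb⟩ : Nonempty (Fin t ↪ u) := by
    rw [← Fintype.card_fin t] at hcard
    exact Function.Embedding.nonempty_of_card_le hcard
  have hchoice : ∀ x : u, ∃ j : κ, Mᵀ j = (x : ι → F) := fun x => hus x.2
  choose cf hcf using hchoice
  refine ⟨fun i => cf (emb i), ?_⟩
  have hcols : (fun j : Fin t => (M.submatrix id (fun i => cf (emb i)))ᵀ j)
      = fun j : Fin t => ((emb j : u) : ι → F) := by
    funext j; ext i
    have := hcf (emb j)
    simp only [Matrix.transpose_apply, Matrix.submatrix_apply, id_eq]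
    rw [← this]
    rfl
  have hindsub : LinearIndependent F (fun j : Fin t => ((emb j : u) : ι → F)) :=
    hind.comp emb emb.injective
  rw [Matrix.rank_eq_finrank_span_cols]
  rw [show (Set.range (M.submatrix id (fun i => cf (emb i))).col)
      = Set.range (fun j : Fin t => ((emb j : u) : ι → F)) from congrArg Set.range hcols]
  rw [finrank_span_eq_card hindsub, Fintype.card_fin]

lemma exists_submatrix_det_ne_zero {ι κ : Type} [Fintype ι] [Fintype κ] {t : ℕ}
    (M : Matrix ι κ F) (h : t ≤ M.rank) :
    ∃ (r : Fin t → ι) (c : Fin t → κ), (M.submatrix r c).det ≠ 0 := by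
  obtain ⟨c, hc⟩ := exists_cols_rank_eq M h
  set N := (M.submatrix id c)ᵀ with hN
  have hNr : t ≤ N.rank := by rw [hN, Matrix.rank_transpose, hc]
  obtain ⟨r, hr⟩ := exists_cols_rank_eq N hNr
  refine ⟨r, c, ?_⟩
  have : N.submatrix id r = (M.submatrix r c)ᵀ := by
    ext i j; simp [hN, Matrix.transpose_apply, Matrix.submatrix_apply]
  rw [← Matrix.det_transpose, ← this]
  exact det_ne_zero_of_rank_eq _ hr

lemma rank_le_iff_minors {ι κ : Type} [Fintype ι] [Fintype κ] [DecidableEq ι]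
    [DecidableEq κ] (M : Matrix ι κ F) (t : ℕ) :
    M.rank ≤ t ↔
      ∀ (r : Fin (t+1) → ι) (c : Fin (t+1) → κ), (M.submatrix r c).det = 0 := by
  constructor
  · intro h r c
    exact det_eq_zero_of_rank_lt _ (lt_of_le_of_lt (rank_submatrix_le_gen M r c)
      (Nat.lt_succ_of_le h))
  · intro h
    by_contra h'
    push_neg at h'
    obtain ⟨r, c, hd⟩ := exists_submatrix_det_ne_zero M (Nat.succ_le_of_lt h')
    exact hd (h r c)

lemma rank_add_rank_le_of_mul_eq_zero {ι κ ν : Type} [Fintype ι] [Fintype κ] [Fintype ν]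
    (A : Matrix ι ν F) (B : Matrix ν κ F) (h : A * B = 0) :
    A.rank + B.rank ≤ Fintype.card ν := by
  have hr : LinearMap.range B.mulVecLin ≤ LinearMap.ker A.mulVecLin := by
    rintro x ⟨y, rfl⟩
    simp only [LinearMap.mem_ker, Matrix.mulVecLin_apply]
    rw [Matrix.mulVec_mulVec, h, Matrix.zero_mulVec]
  have h1 : B.rank ≤ finrank F (LinearMap.ker A.mulVecLin) :=
    Submodule.finrank_mono hr
  have h2 : A.rank + finrank F (LinearMap.ker A.mulVecLin) = Fintype.card ν := by
    have := LinearMap.finrank_range_add_finrank_ker A.mulVecLin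
    rwa [finrank_pi] at this
  omega

-- specialization via a ring hom to a field
lemma rank_map_le_iff {A : Type} [CommRing A] (σ : A →+* F) {ι κ : Type}
    [Fintype ι] [Fintype κ] [DecidableEq ι] [DecidableEq κ]
    (M : Matrix ι κ A) (t : ℕ) :
    (M.map ⇑σ).rank ≤ t ↔
      ∀ (r : Fin (t+1) → ι) (c : Fin (t+1) → κ), σ (M.submatrix r c).det = 0 := by
  rw [rank_le_iff_minors]
  constructor
  · intro h r c
    rw [RingHom.map_det]
    have := h r c
    rwa [show (M.map ⇑σ).submatrix r c = σ.mapMatrix (M.submatrix r c) from rfl] at this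
  · intro h r c
    rw [show (M.map ⇑σ).submatrix r c = σ.mapMatrix (M.submatrix r c) from rfl,
      ← RingHom.map_det]
    exact h r c

lemma rank_map_le_rank_map_of_injective {A : Type} [CommRing A] {F' : Type} [Field F']
    (σ' : A →+* F') (hinj : Function.Injective ⇑σ') (σ : A →+* F) {ι κ : Type}
    [Fintype ι] [Fintype κ] [DecidableEq ι] [DecidableEq κ] (M : Matrix ι κ A) :
    (M.map ⇑σ).rank ≤ (M.map ⇑σ').rank := by
  rw [rank_map_le_iff]
  intro r c
  have h0 : σ' ((M.submatrix r c).det) = 0 := by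
    have := (rank_map_le_iff σ' M ((M.map ⇑σ').rank)).1 le_rfl r c
    exact this
  have : (M.submatrix r c).det = 0 := by
    apply hinj
    rw [h0, map_zero]
  rw [this, map_zero]

end Sec1

section Sec4
variable {n : ℕ}

def SatSub {n : ℕ} (H : AddSubgroup ((Fin n → ℤ) →+ ℤ)) : Prop :=
  ∀ (c : ℤ) (α : (Fin n → ℤ) →+ ℤ), c ≠ 0 → c • α ∈ H → α ∈ H

def Expr {n : ℕ} (P : ∀ m : ℕ, ((Fin n → ℤ) →+ (Fin m → ℤ)) → Prop) : Prop :=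
  ∃ (I : Type) (_ : Fintype I) (Gs : I → AddSubgroup ((Fin n → ℤ) →+ ℤ)),
    (∀ i, SatSub (Gs i) ∧ Gs i ≠ ⊤) ∧
    ∀ (m : ℕ) (p : (Fin n → ℤ) →+ (Fin m → ℤ)), P m p ↔ ∃ i, Subordinate p (Gs i)

lemma Expr.congr {P Q : ∀ m : ℕ, ((Fin n → ℤ) →+ (Fin m → ℤ)) → Prop}
    (h : ∀ m p, P m p ↔ Q m p) (hP : Expr P) : Expr Q := by
  obtain ⟨I, hI, Gs, hG, hiff⟩ := hP
  exact ⟨I, hI, Gs, hG, fun m p => (h m p).symm.trans (hiff m p)⟩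

lemma Expr.disj {J : Type} [Fintype J]
    {P : J → ∀ m : ℕ, ((Fin n → ℤ) →+ (Fin m → ℤ)) → Prop}
    (h : ∀ j, Expr (P j)) : Expr (fun m p => ∃ j, P j m p) := by
  choose I hI Gs hG hiff using h
  refine ⟨Σ j, I j, by exact Sigma.instFintype, fun x => Gs x.1 x.2, fun x => hG x.1 x.2, ?_⟩
  intro m p
  constructor
  · rintro ⟨j, hj⟩
    obtain ⟨i, hi⟩ := (hiff j m p).1 hj
    exact ⟨⟨j, i⟩, hi⟩
  · rintro ⟨⟨j, i⟩, hi⟩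
    exact ⟨j, (hiff j m p).2 ⟨i, hi⟩⟩

lemma subordinate_inf {m : ℕ} (p : (Fin n → ℤ) →+ (Fin m → ℤ)) {J : Type}
    (H : J → AddSubgroup ((Fin n → ℤ) →+ ℤ)) :
    Subordinate p (⨅ j, H j) ↔ ∀ j, Subordinate p (H j) := by
  unfold Subordinate
  constructor
  · intro h j i
    have := h i
    rw [AddSubgroup.mem_iInf] at this
    exact this j
  · intro h i
    rw [AddSubgroup.mem_iInf]
    exact fun j => h j i

lemma Expr.conj {J : Type} [Fintype J] [Nonempty J]
    {P : J → ∀ m : ℕ, ((Fin n → ℤ) →+ (Fin m → ℤ)) → Prop}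
    (h : ∀ j, Expr (P j)) : Expr (fun m p => ∀ j, P j m p) := by
  choose I hI Gs hG hiff using h
  haveI := Classical.decEq J
  refine ⟨∀ j, I j, by exact Pi.instFintype, fun f => ⨅ j, Gs j (f j), ?_, ?_⟩
  · intro f
    constructor
    · intro c α hc hmem
      rw [AddSubgroup.mem_iInf] at hmem ⊢
      exact fun j => (hG j (f j)).1 c α hc (hmem j)
    · intro htop
      obtain ⟨j0⟩ := ‹Nonempty J›
      apply (hG j0 (f j0)).2
      rw [eq_top_iff, ← htop]
      exact iInf_le _ j0
  · intro m p
    constructor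
    · intro hall
      have : ∀ j, ∃ i, Subordinate p (Gs j i) := fun j => (hiff j m p).1 (hall j)
      choose f hf using this
      exact ⟨f, (subordinate_inf p _).2 hf⟩
    · rintro ⟨f, hf⟩ j
      exact (hiff j m p).2 ⟨f j, (subordinate_inf p _).1 hf j⟩

lemma Expr.and {P Q : ∀ m : ℕ, ((Fin n → ℤ) →+ (Fin m → ℤ)) → Prop}
    (hP : Expr P) (hQ : Expr Q) : Expr (fun m p => P m p ∧ Q m p) := by
  have : ∀ b : Bool, Expr (fun m p => if b then P m p else Q m p) := by
    intro b; cases b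
    · simpa using hQ
    · simpa using hP
  have h2 := Expr.conj this
  apply Expr.congr (P := fun m p => ∀ b : Bool, if b then P m p else Q m p) _ h2
  intro m p
  constructor
  · intro h
    exact ⟨by simpa using h true, by simpa using h false⟩
  · rintro ⟨h1, h2⟩ b
    cases b
    · simpa using h2
    · simpa using h1

lemma Expr.false : Expr (fun (_ : ℕ) (_ : (Fin n → ℤ) →+ (Fin _ → ℤ)) => False) := by
  refine ⟨PEmpty, inferInstance, fun i => i.elim, fun i => i.elim, ?_⟩
  intro m p
  simp only [false_iff]
  rintro ⟨i, -⟩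
  exact i.elim

end Sec4

section Sec5
variable {R : Type} [CommRing R] [IsDomain R] {n : ℕ}

lemma mapDomainRingHom_apply' {m : ℕ} (p : (Fin n → ℤ) →+ (Fin m → ℤ))
    (f : AddMonoidAlgebra R (Fin n → ℤ)) (y : Fin m → ℤ) :
    (AddMonoidAlgebra.mapDomainRingHom R p f).coeff y
      = ∑ x ∈ f.coeff.support, if p x = y then f.coeff x else 0 := by
  classical
  have : (AddMonoidAlgebra.mapDomainRingHom R p f).coeff = Finsupp.mapDomain ⇑p f.coeff := rfl
  rw [this, Finsupp.mapDomain, Finsupp.sum_apply, Finsupp.sum]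
  apply Finset.sum_congr rfl
  intro x _
  rw [Finsupp.single_apply]

/-- The subgroup of functionals constant on the fibers of `π`. -/
def fiberSubgroup {T : Finset (Fin n → ℤ)} (π : {x // x ∈ T} → {x // x ∈ T}) :
    AddSubgroup ((Fin n → ℤ) →+ ℤ) where
  carrier := {α | ∀ x y : {x // x ∈ T}, π x = π y → α x.val = α y.val}
  zero_mem' := fun _ _ _ => rfl
  add_mem' := by
    intro a b ha hb x y hxy
    simp only [AddMonoidHom.add_apply, ha x y hxy, hb x y hxy]
  neg_mem' := by
    intro a ha x y hxy
    simp only [AddMonoidHom.neg_apply, ha x y hxy]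

lemma expr_atom (f : AddMonoidAlgebra R (Fin n → ℤ)) (hf : f ≠ 0) :
    Expr (fun m p => AddMonoidAlgebra.mapDomainRingHom R p f = 0) := by
  classical
  set T : Finset (Fin n → ℤ) := f.coeff.support with hT
  set I : Type := {π : {x // x ∈ T} → {x // x ∈ T} //
    ∀ y : {x // x ∈ T}, (∑ x : {x // x ∈ T}, if π x = y then f.coeff x.val else 0) = 0} with hI
  haveI : Fintype I := Fintype.ofFinite I
  refine ⟨I, inferInstance, fun π => fiberSubgroup π.val, ?_, ?_⟩
  · intro π
    constructor
    · -- saturation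
      intro c α hc hmem x y hxy
      have := hmem x y hxy
      simp only [AddMonoidHom.coe_smul, Pi.smul_apply, smul_eq_mul] at this
      exact mul_left_cancel₀ hc this
    · -- proper
      -- π is not injective
      have hninj : ¬ Function.Injective π.val := by
        intro hinj
        -- T is nonempty
        have hTne : T.Nonempty := Finsupp.support_nonempty_iff.2
          (by intro h; apply hf; rw [← AddMonoidAlgebra.coeff_inj]; exact h)
        obtain ⟨x0, hx0⟩ := hTne
        have := π.2 (π.val ⟨x0, hx0⟩)
        rw [Finset.sum_eq_single (⟨x0, hx0⟩ : {x // x ∈ T})] at this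
        · simp only [if_pos rfl] at this
          exact (Finsupp.mem_support_iff.1 hx0) this
        · intro b _ hb
          rw [if_neg (fun h => hb (hinj h))]
        · intro h
          exact absurd (Finset.mem_univ _) h
      rw [Function.not_injective_iff] at hninj
      obtain ⟨x, y, hxy, hne⟩ := hninj
      intro htop
      have hvne : x.val ≠ y.val := fun h => hne (Subtype.ext h)
      have : ∃ i, x.val i ≠ y.val i := by
        by_contra h
        push_neg at h
        exact hvne (funext h)
      obtain ⟨i, hi⟩ := this
      have hmem : (Pi.evalAddMonoidHom (fun _ : Fin n => ℤ) i) ∈ fiberSubgroup π.val := by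
        rw [show fiberSubgroup π.val = ⊤ from htop]; trivial
      exact hi (hmem x y hxy)
  · intro m p
    constructor
    · -- mapDomain p f = 0 → exists π
      intro h0
      set s : Setoid {x // x ∈ T} :=
        ⟨fun x y => p x.val = p y.val, ⟨fun _ => rfl, fun h => h.symm, fun h1 h2 => h1.trans h2⟩⟩
        with hs
      set π : {x // x ∈ T} → {x // x ∈ T} := fun x => (Quotient.mk s x).out with hπ
      have key : ∀ x y, π x = π y ↔ p x.val = p y.val := by
        intro x y
        constructor
        · intro h
          have hx : (Quotient.mk s x) = Quotient.mk s y := by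
            rw [← Quotient.out_eq (Quotient.mk s x), ← Quotient.out_eq (Quotient.mk s y)]
            exact congrArg _ h
          exact Quotient.exact hx
        · intro h
          have : (Quotient.mk s x) = Quotient.mk s y := Quotient.sound h
          rw [hπ]
          simp only [this]
      have hzs : ∀ y : {x // x ∈ T}, (∑ x : {x // x ∈ T}, if π x = y then f.coeff x.val else 0) = 0 := by
        intro y
        by_cases hy : ∃ x0, π x0 = y
        · obtain ⟨x0, hx0⟩ := hy
          have heq : ∀ x : {x // x ∈ T}, (π x = y) ↔ (p x.val = p x0.val) := by
            intro x
            rw [← hx0, key]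
          have h1 : (∑ x : {x // x ∈ T}, if π x = y then f.coeff x.val else 0)
              = ∑ x : {x // x ∈ T}, if p x.val = p x0.val then f.coeff x.val else 0 := by
            apply Finset.sum_congr rfl
            intro x _
            rw [if_congr (heq x) rfl rfl]
          rw [h1]
          have h2 : (∑ x : {x // x ∈ T}, if p x.val = p x0.val then f.coeff x.val else 0)
              = ∑ x ∈ T, if p x = p x0.val then f.coeff x else 0 := by
            rw [Finset.univ_eq_attach, Finset.sum_attach T (fun x => if p x = p x0.val then f.coeff x else 0)]
          rw [h2, ← mapDomainRingHom_apply' p f (p x0.val), h0]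
          rfl
        · push_neg at hy
          apply Finset.sum_eq_zero
          intro x _
          rw [if_neg (hy x)]
      refine ⟨⟨π, hzs⟩, ?_⟩
      intro j
      intro x y hxy
      simp only [AddMonoidHom.coe_comp, Function.comp_apply, Pi.evalAddMonoidHom_apply]
      rw [(key x y).1 hxy]
    · -- exists π → mapDomain p f = 0
      rintro ⟨π, hπ⟩
      have hconst : ∀ x y : {x // x ∈ T}, π.val x = π.val y → p x.val = p y.val := by
        intro x y hxy
        funext j
        exact hπ j x y hxy
      apply AddMonoidAlgebra.coeff_injective
      apply Finsupp.ext
      intro y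
      simp only [AddMonoidAlgebra.coeff_zero, Finsupp.coe_zero, Pi.zero_apply]
      rw [mapDomainRingHom_apply' p f y]
      have h2 : (∑ x ∈ T, if p x = y then f.coeff x else 0)
          = ∑ x : {x // x ∈ T}, if p x.val = y then f.coeff x.val else 0 := by
        rw [Finset.univ_eq_attach, Finset.sum_attach T (fun x => if p x = y then f.coeff x else 0)]
      rw [h2]
      have h3 : (∑ x : {x // x ∈ T}, if p x.val = y then f.coeff x.val else 0)
          = ∑ y0 : {x // x ∈ T}, ∑ x : {x // x ∈ T},
              if π.val x = y0 then (if p x.val = y then f.coeff x.val else 0) else 0 := by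
        rw [Finset.sum_comm]
        apply Finset.sum_congr rfl
        intro x _
        rw [Finset.sum_ite_eq (Finset.univ) (π.val x) (fun _ => if p x.val = y then f.coeff x.val else 0)]
        simp
      rw [h3]
      apply Finset.sum_eq_zero
      intro y0 _
      by_cases hex : ∃ x0, π.val x0 = y0 ∧ p x0.val = y
      · obtain ⟨x0, hx01, hx02⟩ := hex
        have : (∑ x : {x // x ∈ T},
            if π.val x = y0 then (if p x.val = y then f.coeff x.val else 0) else 0)
            = ∑ x : {x // x ∈ T}, if π.val x = y0 then f.coeff x.val else 0 := by
          apply Finset.sum_congr rfl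
          intro x _
          by_cases hx : π.val x = y0
          · rw [if_pos hx, if_pos hx, if_pos]
            rw [hconst x x0 (hx.trans hx01.symm), hx02]
          · rw [if_neg hx, if_neg hx]
        rw [this, π.2 y0]
      · push_neg at hex
        apply Finset.sum_eq_zero
        intro x _
        by_cases hx : π.val x = y0
        · rw [if_pos hx, if_neg (hex x hx)]
        · rw [if_neg hx]

end Sec5
section Sec6

lemma exists_compl_of_satSub {n : ℕ} (H : AddSubgroup ((Fin n → ℤ) →+ ℤ))
    (hs : SatSub H) : ∃ K, IsCompl H K := by
  set D := ((Fin n → ℤ) →+ ℤ)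
  set S : Submodule ℤ D := AddSubgroup.toIntSubmodule H with hS
  haveI : NoZeroSMulDivisors ℤ (D ⧸ S) := by
    refine ⟨?_⟩
    intro c x h
    by_cases hc : c = 0
    · exact Or.inl hc
    · right
      obtain ⟨α, rfl⟩ := Submodule.mkQ_surjective S x
      rw [← map_smul, Submodule.mkQ_apply, Submodule.Quotient.mk_eq_zero] at h
      have : α ∈ H := hs c α hc h
      rw [Submodule.mkQ_apply, Submodule.Quotient.mk_eq_zero]
      exact this
  haveI : Module.Free ℤ (D ⧸ S) := Module.free_of_finite_type_torsion_free'
  obtain ⟨sec, hsec⟩ := Module.projective_lifting_property S.mkQ LinearMap.id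
    (Submodule.mkQ_surjective S)
  have hsec' : ∀ x, S.mkQ (sec x) = x := fun x => congrArg (fun g => g x) hsec
  set K : Submodule ℤ D := LinearMap.range sec with hK
  have hcompl : IsCompl S K := by
    constructor
    · rw [disjoint_iff_inf_le]
      rintro x ⟨hxS, hxK⟩
      obtain ⟨y, rfl⟩ := hxK
      have : S.mkQ (sec y) = 0 := by
        rw [Submodule.mkQ_apply, Submodule.Quotient.mk_eq_zero]
        exact hxS
      rw [hsec'] at this
      rw [this, map_zero]
      rfl
    · rw [codisjoint_iff_le_sup]
      intro x _
      rw [Submodule.mem_sup]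
      refine ⟨x - sec (S.mkQ x), ?_, sec (S.mkQ x), ⟨S.mkQ x, rfl⟩, by abel⟩
      rw [← Submodule.Quotient.mk_eq_zero, ← Submodule.mkQ_apply, map_sub, hsec', sub_self]
  refine ⟨K.toAddSubgroup, ?_⟩
  constructor
  · rw [disjoint_iff_inf_le]
    intro x hx
    have h1 : x ∈ S ⊓ K := by
      refine ⟨hx.1, ?_⟩
      exact (Submodule.mem_toAddSubgroup K).1 hx.2
    rw [hcompl.inf_eq_bot] at h1
    exact h1
  · rw [codisjoint_iff_le_sup]
    intro x _
    have h1 : x ∈ S ⊔ K := by rw [hcompl.sup_eq_top]; trivial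
    rw [Submodule.mem_sup] at h1
    obtain ⟨y, hy, z, hz, rfl⟩ := h1
    apply AddSubgroup.add_mem_sup hy
    exact (Submodule.mem_toAddSubgroup K).2 hz

end Sec6
section Glue
variable {G : Type} [Group G] {l : ℕ} {S S' : Type} [CommRing S] [CommRing S']

lemma reprMatRingHom_glMap (τ : G →* GL (Fin l) S) (h : S →+* S') :
    reprMatRingHom ((glMap h).comp τ) = h.mapMatrix.comp (reprMatRingHom τ) := by
  apply MonoidAlgebra.ringHom_ext
  · intro b
    have h1 : (reprMatRingHom ((glMap h).comp τ)) (MonoidAlgebra.single 1 b)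
        = b • (1 : Matrix (Fin l) (Fin l) S') := by
      rw [show (reprMatRingHom ((glMap h).comp τ)) (MonoidAlgebra.single 1 b)
        = ((MonoidAlgebra.lift ℤ (Matrix (Fin l) (Fin l) S') G)
          ((Units.coeHom _).comp ((glMap h).comp τ))) (MonoidAlgebra.single 1 b) from rfl,
        MonoidAlgebra.lift_single, map_one]
    have h2 : (h.mapMatrix.comp (reprMatRingHom τ)) (MonoidAlgebra.single 1 b)
        = b • (1 : Matrix (Fin l) (Fin l) S') := by
      rw [RingHom.comp_apply,
        show (reprMatRingHom τ) (MonoidAlgebra.single 1 b)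
        = ((MonoidAlgebra.lift ℤ (Matrix (Fin l) (Fin l) S) G)
          ((Units.coeHom _).comp τ)) (MonoidAlgebra.single 1 b) from rfl,
        MonoidAlgebra.lift_single, map_one, map_zsmul, map_one]
    rw [h1, h2]
  · intro a
    have h1 : (reprMatRingHom ((glMap h).comp τ)) (MonoidAlgebra.single a 1)
        = h.mapMatrix ((τ a : Matrix (Fin l) (Fin l) S)) := by
      rw [show (reprMatRingHom ((glMap h).comp τ)) (MonoidAlgebra.single a 1)
        = ((MonoidAlgebra.lift ℤ (Matrix (Fin l) (Fin l) S') G)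
          ((Units.coeHom _).comp ((glMap h).comp τ))) (MonoidAlgebra.single a 1) from rfl,
        MonoidAlgebra.lift_single, one_smul]
      rfl
    have h2 : (h.mapMatrix.comp (reprMatRingHom τ)) (MonoidAlgebra.single a 1)
        = h.mapMatrix ((τ a : Matrix (Fin l) (Fin l) S)) := by
      rw [RingHom.comp_apply,
        show (reprMatRingHom τ) (MonoidAlgebra.single a 1)
        = ((MonoidAlgebra.lift ℤ (Matrix (Fin l) (Fin l) S) G)
          ((Units.coeHom _).comp τ)) (MonoidAlgebra.single a 1) from rfl,
        MonoidAlgebra.lift_single, one_smul]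
      rfl
    rw [h1, h2]

lemma blockFlatten_map {a b u : ℕ} (h : S →+* S')
    (X : Matrix (Fin a) (Fin b) (Matrix (Fin u) (Fin u) S)) :
    blockFlatten (X.map ⇑h.mapMatrix) = (blockFlatten X).map ⇑h := by
  ext ⟨i, w⟩ ⟨j, v⟩
  rfl

lemma blockFlatten_mul {a b c u : ℕ}
    (X : Matrix (Fin a) (Fin b) (Matrix (Fin u) (Fin u) S))
    (Y : Matrix (Fin b) (Fin c) (Matrix (Fin u) (Fin u) S)) :
    blockFlatten (X * Y) = blockFlatten X * blockFlatten Y := by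
  ext ⟨i, w⟩ ⟨j, v⟩
  simp only [blockFlatten, Matrix.of_apply, Matrix.mul_apply, Matrix.sum_apply,
    Fintype.sum_prod_type]

lemma blockFlatten_zero {a b u : ℕ} :
    blockFlatten (0 : Matrix (Fin a) (Fin b) (Matrix (Fin u) (Fin u) S)) = 0 := by
  ext ⟨i, w⟩ ⟨j, v⟩
  rfl

end Glue

section RankExpr
variable {R : Type} [CommRing R] [IsDomain R] {n : ℕ}

lemma map_map_ringHom {ι κ : Type} {S S' S'' : Type} [CommRing S] [CommRing S']
    [CommRing S''] (M : Matrix ι κ S) (f : S →+* S') (g : S' →+* S'') :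
    (M.map ⇑f).map ⇑g = M.map ⇑(g.comp f) := by
  rw [Matrix.map_map, RingHom.coe_comp]

lemma expr_rank_le {ι κ : Type} [Fintype ι] [Fintype κ] [DecidableEq ι] [DecidableEq κ]
    (M : Matrix ι κ (AddMonoidAlgebra R (Fin n → ℤ))) (t : ℕ)
    (ht : t < ((M.map ⇑(algebraMap (AddMonoidAlgebra R (Fin n → ℤ))
      (FractionRing (AddMonoidAlgebra R (Fin n → ℤ))))).rank)) :
    Expr (fun m p =>
      ((M.map ⇑(AddMonoidAlgebra.mapDomainRingHom R p)).map
        ⇑(algebraMap (AddMonoidAlgebra R (Fin m → ℤ))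
          (FractionRing (AddMonoidAlgebra R (Fin m → ℤ))))).rank ≤ t) := by
  classical
  haveI hA : IsDomain (AddMonoidAlgebra R (Fin n → ℤ)) := NoZeroDivisors.to_isDomain _
  set J := {rc : (Fin (t+1) → ι) × (Fin (t+1) → κ) // (M.submatrix rc.1 rc.2).det ≠ 0}
    with hJ
  haveI : Fintype J := Fintype.ofFinite J
  haveI : Nonempty J := by
    obtain ⟨r, c, hrc⟩ := exists_submatrix_det_ne_zero
      (M.map ⇑(algebraMap (AddMonoidAlgebra R (Fin n → ℤ))
        (FractionRing (AddMonoidAlgebra R (Fin n → ℤ))))) (Nat.succ_le_of_lt ht)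
    refine ⟨⟨(r, c), ?_⟩⟩
    intro h0
    apply hrc
    rw [show (M.map ⇑(algebraMap (AddMonoidAlgebra R (Fin n → ℤ))
        (FractionRing (AddMonoidAlgebra R (Fin n → ℤ))))).submatrix r c
      = (algebraMap (AddMonoidAlgebra R (Fin n → ℤ))
        (FractionRing (AddMonoidAlgebra R (Fin n → ℤ)))).mapMatrix (M.submatrix r c)
      from rfl, ← RingHom.map_det, h0, map_zero]
  have hconj := Expr.conj (J := J)
    (fun rc => expr_atom (M.submatrix rc.1.1 rc.1.2).det rc.2)
  apply Expr.congr _ hconj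
  intro m p
  haveI hSm : IsDomain (AddMonoidAlgebra R (Fin m → ℤ)) := NoZeroDivisors.to_isDomain _
  rw [map_map_ringHom M (AddMonoidAlgebra.mapDomainRingHom R p)
    (algebraMap (AddMonoidAlgebra R (Fin m → ℤ))
      (FractionRing (AddMonoidAlgebra R (Fin m → ℤ)))),
    rank_map_le_iff]
  constructor
  · intro h r c
    by_cases hd : (M.submatrix r c).det = 0
    · rw [hd, map_zero]
    · have := h ⟨(r, c), hd⟩
      rw [RingHom.comp_apply, this, map_zero]
  · intro h rc
    have h1 := h rc.1.1 rc.1.2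
    rw [RingHom.comp_apply] at h1
    have hinj : Function.Injective ⇑(algebraMap (AddMonoidAlgebra R (Fin m → ℤ))
        (FractionRing (AddMonoidAlgebra R (Fin m → ℤ)))) :=
      IsFractionRing.injective _ _
    apply hinj
    rw [h1, map_zero]

lemma rank_map_spec_le {ι κ : Type} [Fintype ι] [Fintype κ] [DecidableEq ι] [DecidableEq κ]
    (M : Matrix ι κ (AddMonoidAlgebra R (Fin n → ℤ))) (m : ℕ)
    (p : (Fin n → ℤ) →+ (Fin m → ℤ)) :
    ((M.map ⇑(AddMonoidAlgebra.mapDomainRingHom R p)).map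
        ⇑(algebraMap (AddMonoidAlgebra R (Fin m → ℤ))
          (FractionRing (AddMonoidAlgebra R (Fin m → ℤ))))).rank
      ≤ (M.map ⇑(algebraMap (AddMonoidAlgebra R (Fin n → ℤ))
          (FractionRing (AddMonoidAlgebra R (Fin n → ℤ))))).rank := by
  haveI hA : IsDomain (AddMonoidAlgebra R (Fin n → ℤ)) := NoZeroDivisors.to_isDomain _
  haveI hSm : IsDomain (AddMonoidAlgebra R (Fin m → ℤ)) := NoZeroDivisors.to_isDomain _
  rw [map_map_ringHom]
  exact rank_map_le_rank_map_of_injective _ (IsFractionRing.injective _ _) _ M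

end RankExpr

section BdryGlue
variable {G : Type} [Group G] {l : ℕ}

lemma reprBdryRank_glMap {S S' : Type} [CommRing S] [CommRing S']
    (C : FinFreeChainComplex (MonoidAlgebra ℤ G)) (τ : G →* GL (Fin l) S)
    (h : S →+* S') (j : ℕ) :
    reprBdryRank C ((glMap h).comp τ) j
      = (((blockFlatten ((C.d j).map ⇑(reprMatRingHom τ))).map ⇑h).map
          ⇑(algebraMap S' (FractionRing S'))).rank := by
  unfold reprBdryRank
  rw [reprMatRingHom_glMap,
    show ⇑(h.mapMatrix.comp (reprMatRingHom τ))
      = ⇑h.mapMatrix ∘ ⇑(reprMatRingHom τ) from rfl,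
    ← Matrix.map_map, blockFlatten_map]

lemma blockFlatten_d_mul_zero {S : Type} [CommRing S]
    (C : FinFreeChainComplex (MonoidAlgebra ℤ G)) (τ : G →* GL (Fin l) S) (j : ℕ) :
    blockFlatten ((C.d j).map ⇑(reprMatRingHom τ))
      * blockFlatten ((C.d (j+1)).map ⇑(reprMatRingHom τ)) = 0 := by
  rw [← blockFlatten_mul, ← Matrix.map_mul, C.dsq j, Matrix.map_zero _ (map_zero _),
    blockFlatten_zero]

end BdryGlue

section ToFin
variable {n : ℕ}

lemma Expr.toFin {P : ∀ m : ℕ, ((Fin n → ℤ) →+ (Fin m → ℤ)) → Prop} (h : Expr P) :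
    ∃ (s : ℕ) (Gs : Fin s → AddSubgroup ((Fin n → ℤ) →+ ℤ)),
      (∀ i, (∃ K, IsCompl (Gs i) K) ∧ Gs i ≠ ⊤) ∧
      ∀ (m : ℕ) (p : (Fin n → ℤ) →+ (Fin m → ℤ)), P m p ↔ ∃ i, Subordinate p (Gs i) := by
  obtain ⟨I, fI, Gs, hGood, hiff⟩ := h
  refine ⟨Fintype.card I, fun j => Gs ((Fintype.equivFin I).symm j), ?_, ?_⟩
  · intro j
    exact ⟨exists_compl_of_satSub _ (hGood _).1, (hGood _).2⟩
  · intro m p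
    rw [hiff m p]
    exact Equiv.exists_congr_left (Fintype.equivFin I)

end ToFin

/-- for a representation `ρ : G → GL(l, R)` over an integral domain `R`, a
surjection `φ : G → ℤⁿ`, the twisted representation `ρ°(g) = φ(g)·ρ(g)`, a bounded
complex `C_*` of f.g. free right `ℤ[G]`-modules, and `k ≥ 0`, `q > 0`, there is a finite
family of proper full subgroups `G_1, …, G_s` of `Hom(ℤⁿ, ℤ)` such that for every `m`
and `p : ℤⁿ → ℤᵐ`, one has `b_k(C_*, ρ; p) ≥ b_k°(C_*, ρ) + q` iff `p` is subordinate
to some `G_i`. -/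
theorem exists_jump_subgroups_twisted
    {G : Type} [Group G] {R : Type} [CommRing R] [IsDomain R] {n l : ℕ}
    (ρ : G →* GL (Fin l) R)
    (φ : G →* Multiplicative (Fin n → ℤ)) (hφ : Function.Surjective φ)
    (ρO : G →* GL (Fin l) (AddMonoidAlgebra R (Fin n → ℤ)))
    (hρO : ∀ g : G, (ρO g : Matrix (Fin l) (Fin l) (AddMonoidAlgebra R (Fin n → ℤ))) =
      AddMonoidAlgebra.single (Multiplicative.toAdd (φ g)) (1 : R) •
        ((ρ g : Matrix (Fin l) (Fin l) R).map
          ⇑(algebraMap R (AddMonoidAlgebra R (Fin n → ℤ)))))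
    (C : FinFreeChainComplex (MonoidAlgebra ℤ G)) (k : ℕ) (q : ℕ) (hq : 0 < q) :
    ∃ (s : ℕ) (Gs : Fin s → AddSubgroup ((Fin n → ℤ) →+ ℤ)),
      (∀ i, (∃ K, IsCompl (Gs i) K) ∧ Gs i ≠ ⊤) ∧
      ∀ (m : ℕ) (p : (Fin n → ℤ) →+ (Fin m → ℤ)),
        reprBetti C ρO k + q ≤
          reprBetti C ((glMap (AddMonoidAlgebra.mapDomainRingHom R p)).comp ρO) k ↔
        ∃ i, Subordinate p (Gs i) := by
  classical
  haveI hA : IsDomain (AddMonoidAlgebra R (Fin n → ℤ)) := NoZeroDivisors.to_isDomain _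
  apply Expr.toFin
  clear hρO hφ φ ρ
  obtain _ | k' := k
  · -- k = 0
    set M1 := blockFlatten ((C.d 0).map ⇑(reprMatRingHom ρO)) with hM1
    set r1 := (M1.map ⇑(algebraMap (AddMonoidAlgebra R (Fin n → ℤ))
      (FractionRing (AddMonoidAlgebra R (Fin n → ℤ))))).rank with hr1
    have e1 : reprBetti C ρO 0 = C.c 0 * l - 0 - r1 := by rw [hr1, hM1]; rfl
    have e2 : ∀ (m : ℕ) (p : (Fin n → ℤ) →+ (Fin m → ℤ)),
        reprBetti C ((glMap (AddMonoidAlgebra.mapDomainRingHom R p)).comp ρO) 0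
          = C.c 0 * l - 0 -
            ((M1.map ⇑(AddMonoidAlgebra.mapDomainRingHom R p)).map
              ⇑(algebraMap (AddMonoidAlgebra R (Fin m → ℤ))
                (FractionRing (AddMonoidAlgebra R (Fin m → ℤ))))).rank := by
      intro m p
      show C.c 0 * l - 0 - reprBdryRank C
        ((glMap (AddMonoidAlgebra.mapDomainRingHom R p)).comp ρO) 0 = _
      rw [reprBdryRank_glMap C ρO (AddMonoidAlgebra.mapDomainRingHom R p) 0, ← hM1]
    have hs1 : ∀ (m : ℕ) (p : (Fin n → ℤ) →+ (Fin m → ℤ)),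
        ((M1.map ⇑(AddMonoidAlgebra.mapDomainRingHom R p)).map
          ⇑(algebraMap (AddMonoidAlgebra R (Fin m → ℤ))
            (FractionRing (AddMonoidAlgebra R (Fin m → ℤ))))).rank ≤ r1 := by
      intro m p
      rw [hr1]
      exact rank_map_spec_le M1 m p
    have hr1le : r1 ≤ C.c 0 * l := by
      rw [hr1]
      have := Matrix.rank_le_card_height (M1.map ⇑(algebraMap (AddMonoidAlgebra R (Fin n → ℤ))
        (FractionRing (AddMonoidAlgebra R (Fin n → ℤ)))))
      simpa [Fintype.card_prod] using this
    by_cases hqr : q ≤ r1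
    · apply Expr.congr _ (expr_rank_le M1 (r1 - q) (by rw [← hr1]; omega))
      intro m p
      have h1 := hs1 m p
      rw [e1, e2 m p]
      omega
    · apply Expr.congr _ (Expr.false (n := n))
      intro m p
      have h1 := hs1 m p
      rw [e1, e2 m p]
      constructor
      · exact False.elim
      · intro h
        exfalso
        omega
  · -- k = k' + 1
    set M0 := blockFlatten ((C.d k').map ⇑(reprMatRingHom ρO)) with hM0
    set M1 := blockFlatten ((C.d (k'+1)).map ⇑(reprMatRingHom ρO)) with hM1
    set r0 := (M0.map ⇑(algebraMap (AddMonoidAlgebra R (Fin n → ℤ))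
      (FractionRing (AddMonoidAlgebra R (Fin n → ℤ))))).rank with hr0
    set r1 := (M1.map ⇑(algebraMap (AddMonoidAlgebra R (Fin n → ℤ))
      (FractionRing (AddMonoidAlgebra R (Fin n → ℤ))))).rank with hr1
    have e1 : reprBetti C ρO (k'+1) = C.c (k'+1) * l - r0 - r1 := by
      rw [hr0, hr1, hM0, hM1]; rfl
    have e2 : ∀ (m : ℕ) (p : (Fin n → ℤ) →+ (Fin m → ℤ)),
        reprBetti C ((glMap (AddMonoidAlgebra.mapDomainRingHom R p)).comp ρO) (k'+1)
          = C.c (k'+1) * l -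
            ((M0.map ⇑(AddMonoidAlgebra.mapDomainRingHom R p)).map
              ⇑(algebraMap (AddMonoidAlgebra R (Fin m → ℤ))
                (FractionRing (AddMonoidAlgebra R (Fin m → ℤ))))).rank -
            ((M1.map ⇑(AddMonoidAlgebra.mapDomainRingHom R p)).map
              ⇑(algebraMap (AddMonoidAlgebra R (Fin m → ℤ))
                (FractionRing (AddMonoidAlgebra R (Fin m → ℤ))))).rank := by
      intro m p
      show C.c (k'+1) * l -
        reprBdryRank C ((glMap (AddMonoidAlgebra.mapDomainRingHom R p)).comp ρO) k' -
        reprBdryRank C ((glMap (AddMonoidAlgebra.mapDomainRingHom R p)).comp ρO) (k'+1) = _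
      rw [reprBdryRank_glMap C ρO (AddMonoidAlgebra.mapDomainRingHom R p) k',
        reprBdryRank_glMap C ρO (AddMonoidAlgebra.mapDomainRingHom R p) (k'+1), ← hM0, ← hM1]
    have hs0 : ∀ (m : ℕ) (p : (Fin n → ℤ) →+ (Fin m → ℤ)),
        ((M0.map ⇑(AddMonoidAlgebra.mapDomainRingHom R p)).map
          ⇑(algebraMap (AddMonoidAlgebra R (Fin m → ℤ))
            (FractionRing (AddMonoidAlgebra R (Fin m → ℤ))))).rank ≤ r0 := by
      intro m p
      rw [hr0]
      exact rank_map_spec_le M0 m p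
    have hs1 : ∀ (m : ℕ) (p : (Fin n → ℤ) →+ (Fin m → ℤ)),
        ((M1.map ⇑(AddMonoidAlgebra.mapDomainRingHom R p)).map
          ⇑(algebraMap (AddMonoidAlgebra R (Fin m → ℤ))
            (FractionRing (AddMonoidAlgebra R (Fin m → ℤ))))).rank ≤ r1 := by
      intro m p
      rw [hr1]
      exact rank_map_spec_le M1 m p
    have hr01 : r0 + r1 ≤ C.c (k'+1) * l := by
      rw [hr0, hr1]
      have hz : (M0.map ⇑(algebraMap (AddMonoidAlgebra R (Fin n → ℤ))
            (FractionRing (AddMonoidAlgebra R (Fin n → ℤ)))))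
          * (M1.map ⇑(algebraMap (AddMonoidAlgebra R (Fin n → ℤ))
            (FractionRing (AddMonoidAlgebra R (Fin n → ℤ))))) = 0 := by
        rw [← Matrix.map_mul, hM0, hM1, blockFlatten_d_mul_zero C ρO k',
          Matrix.map_zero _ (map_zero _)]
      have := rank_add_rank_le_of_mul_eq_zero _ _ hz
      simpa [Fintype.card_prod] using this
    have hs01 : ∀ (m : ℕ) (p : (Fin n → ℤ) →+ (Fin m → ℤ)),
        ((M0.map ⇑(AddMonoidAlgebra.mapDomainRingHom R p)).map
          ⇑(algebraMap (AddMonoidAlgebra R (Fin m → ℤ))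
            (FractionRing (AddMonoidAlgebra R (Fin m → ℤ))))).rank +
        ((M1.map ⇑(AddMonoidAlgebra.mapDomainRingHom R p)).map
          ⇑(algebraMap (AddMonoidAlgebra R (Fin m → ℤ))
            (FractionRing (AddMonoidAlgebra R (Fin m → ℤ))))).rank ≤ C.c (k'+1) * l := by
      intro m p
      haveI : IsDomain (AddMonoidAlgebra R (Fin m → ℤ)) := NoZeroDivisors.to_isDomain _
      have hz : ((M0.map ⇑(AddMonoidAlgebra.mapDomainRingHom R p)).map
            ⇑(algebraMap (AddMonoidAlgebra R (Fin m → ℤ))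
              (FractionRing (AddMonoidAlgebra R (Fin m → ℤ)))))
          * ((M1.map ⇑(AddMonoidAlgebra.mapDomainRingHom R p)).map
            ⇑(algebraMap (AddMonoidAlgebra R (Fin m → ℤ))
              (FractionRing (AddMonoidAlgebra R (Fin m → ℤ))))) = 0 := by
        rw [map_map_ringHom, map_map_ringHom, ← Matrix.map_mul, hM0, hM1,
          blockFlatten_d_mul_zero C ρO k', Matrix.map_zero _ (map_zero _)]
      have := rank_add_rank_le_of_mul_eq_zero _ _ hz
      simpa [Fintype.card_prod] using this
    -- the family of conditions indexed by j : Fin (q+1)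
    have hQ : ∀ j : Fin (q+1), Expr (fun (m : ℕ) (p : (Fin n → ℤ) →+ (Fin m → ℤ)) =>
        ((j : ℕ) ≤ r0 ∧ q - (j : ℕ) ≤ r1) ∧
        (((M0.map ⇑(AddMonoidAlgebra.mapDomainRingHom R p)).map
            ⇑(algebraMap (AddMonoidAlgebra R (Fin m → ℤ))
              (FractionRing (AddMonoidAlgebra R (Fin m → ℤ))))).rank ≤ r0 - (j : ℕ) ∧
          ((M1.map ⇑(AddMonoidAlgebra.mapDomainRingHom R p)).map
            ⇑(algebraMap (AddMonoidAlgebra R (Fin m → ℤ))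
              (FractionRing (AddMonoidAlgebra R (Fin m → ℤ))))).rank ≤ r1 - (q - (j : ℕ)))) := by
      intro j
      by_cases hfeas : (j : ℕ) ≤ r0 ∧ q - (j : ℕ) ≤ r1
      · by_cases hj0 : (j : ℕ) = 0
        · apply Expr.congr _ (expr_rank_le M1 (r1 - q) (by rw [← hr1]; omega))
          intro m p
          have h0 := hs0 m p
          rw [hj0]
          constructor
          · intro h1
            exact ⟨⟨by omega, by omega⟩, by omega, by omega⟩
          · rintro ⟨-, -, h2⟩
            omega
        · by_cases hjq : (j : ℕ) = q
          · apply Expr.congr _ (expr_rank_le M0 (r0 - q) (by rw [← hr0]; omega))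
            intro m p
            have h1 := hs1 m p
            rw [hjq]
            constructor
            · intro h2
              exact ⟨⟨by omega, by omega⟩, by omega, by omega⟩
            · rintro ⟨-, h2, -⟩
              omega
          · have hjlt : (j : ℕ) ≤ q := by omega
            apply Expr.congr _ (Expr.and
              (expr_rank_le M0 (r0 - (j : ℕ)) (by rw [← hr0]; omega))
              (expr_rank_le M1 (r1 - (q - (j : ℕ))) (by rw [← hr1]; omega)))
            intro m p
            constructor
            · rintro ⟨h1, h2⟩
              exact ⟨⟨by omega, by omega⟩, h1, h2⟩
            · rintro ⟨-, h1, h2⟩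
              exact ⟨h1, h2⟩
      · apply Expr.congr _ (Expr.false (n := n))
        intro m p
        constructor
        · exact False.elim
        · rintro ⟨hc, -⟩
          exact hfeas hc
    apply Expr.congr _ (Expr.disj hQ)
    intro m p
    have h0 := hs0 m p
    have h1 := hs1 m p
    have h01 := hs01 m p
    have hjb : ∀ j : Fin (q+1), (j : ℕ) ≤ q := fun j => by omega
    rw [e1, e2 m p]
    constructor
    · rintro ⟨j, ⟨hj1, hj2⟩, hc1, hc2⟩
      have := hjb j
      omega
    · intro h
      refine ⟨⟨min q (r0 -
        ((M0.map ⇑(AddMonoidAlgebra.mapDomainRingHom R p)).map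
          ⇑(algebraMap (AddMonoidAlgebra R (Fin m → ℤ))
            (FractionRing (AddMonoidAlgebra R (Fin m → ℤ))))).rank), by omega⟩,
        ⟨?_, ?_⟩, ?_, ?_⟩ <;>
      · simp only [Fin.val_mk]
        omega
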